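/- arXiv:2307.01348 — 3 statements merged into one kernel-verified Lean document; each statement's English description precedes it below -/
import Mathlib

section
/- If N is a standard normal random variable, then for every real ψ with |ψ| ≤ 1/4, E[exp(ψ(N² − 1))] ≤ exp(2ψ²). -/
open MeasureTheory ProbabilityTheory Real

/-- MGF bound for the centered square of a standard normal:
`E[exp(ψ(N² − 1))] ≤ exp(2ψ²)` whenever `|ψ| ≤ 1/4`. -/
theorem mgf_centered_chisq_le
    (ψ : ℝ) (hψ : |ψ| ≤ 1 / 4) :
    ∫ x, Real.exp (ψ * (x ^ 2 - 1)) ∂(gaussianReal 0 1) ≤ Real.exp (2 * ψ ^ 2) := by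
  obtain ⟨hψl, hψr⟩ := abs_le.mp hψ
  have hb : (0:ℝ) < 1/2 - ψ := by linarith
  have hmeas : Measurable fun x : ℝ => (gaussianPDFReal 0 1 x).toNNReal :=
    (measurable_gaussianPDFReal 0 1).real_toNNReal
  have hEq : ∫ x, Real.exp (ψ * (x ^ 2 - 1)) ∂(gaussianReal 0 1)
      = (Real.sqrt (2 * π))⁻¹ * Real.exp (-ψ) * Real.sqrt (π / (1/2 - ψ)) := by
    rw [gaussianReal_of_var_ne_zero 0 one_ne_zero]
    have hpdf : gaussianPDF 0 1 = fun x => ((gaussianPDFReal 0 1 x).toNNReal : ENNReal) := rfl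
    rw [hpdf, integral_withDensity_eq_integral_smul hmeas]
    have hfun : ∀ x : ℝ, (gaussianPDFReal 0 1 x).toNNReal • Real.exp (ψ * (x ^ 2 - 1))
        = (Real.sqrt (2 * π))⁻¹ * Real.exp (-ψ) * Real.exp (-(1/2 - ψ) * x ^ 2) := by
      intro x
      rw [NNReal.smul_def, smul_eq_mul, Real.coe_toNNReal _ (gaussianPDFReal_nonneg 0 1 x)]
      simp only [gaussianPDFReal, NNReal.coe_one, mul_one, sub_zero]
      rw [mul_assoc, ← Real.exp_add, show -x ^ 2 / 2 + ψ * (x ^ 2 - 1)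
        = -ψ + -(1/2 - ψ) * x ^ 2 by ring, Real.exp_add, ← mul_assoc]
    simp only [hfun]
    rw [MeasureTheory.integral_const_mul, integral_gaussian]
  rw [hEq]
  set s := Real.sqrt (1 - 2*ψ) with hs_def
  have hspos : 0 < s := Real.sqrt_pos.mpr (by linarith)
  have hs2 : s ^ 2 = 1 - 2*ψ := Real.sq_sqrt (by linarith)
  have hsqrt2pi : (0:ℝ) < Real.sqrt (2 * π) := Real.sqrt_pos.mpr (by positivity)
  have hrw : Real.sqrt (π / (1/2 - ψ)) = Real.sqrt (2 * π) / s := by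
    rw [show π / (1/2 - ψ) = (2 * π) / (1 - 2*ψ) by field_simp,
      Real.sqrt_div (by positivity)]
  rw [hrw]
  have hLHS : (Real.sqrt (2 * π))⁻¹ * Real.exp (-ψ) * (Real.sqrt (2 * π) / s)
      = Real.exp (-ψ) / s := by
    field_simp
  rw [hLHS, div_le_iff₀ hspos]
  -- core inequality: 1 ≤ exp(2ψ + 4ψ²) * (1 - 2ψ)
  have hcore : 1 ≤ Real.exp (2*ψ + 4*ψ^2) * (1 - 2*ψ) := by
    rcases le_or_gt ψ 0 with hneg | hpos
    · nlinarith [Real.add_one_le_exp (2*ψ + 4*ψ^2), sq_nonneg ψ,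
        mul_nonneg (mul_nonneg (neg_nonneg.mpr hneg) (neg_nonneg.mpr hneg))
          (neg_nonneg.mpr hneg)]
    · have ht : (0:ℝ) ≤ 2*ψ + 4*ψ^2 := by nlinarith
      nlinarith [Real.quadratic_le_exp_of_nonneg ht, sq_nonneg ψ, sq_nonneg (1/4 - ψ),
        mul_nonneg (sq_nonneg ψ) hpos.le, mul_nonneg (mul_nonneg (sq_nonneg ψ) hpos.le) hpos.le,
        mul_nonneg (mul_nonneg (sq_nonneg ψ) (sq_nonneg ψ)) hpos.le]
  -- squared inequality
  have hsq : (Real.exp (-ψ)) ^ 2 ≤ (Real.exp (2 * ψ ^ 2) * s) ^ 2 := by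
    rw [mul_pow, hs2, ← Real.exp_nat_mul, ← Real.exp_nat_mul]
    have h1 : Real.exp ((2:ℕ) * -ψ) = Real.exp (-(2*ψ)) := by norm_num
    have h2 : Real.exp ((2:ℕ) * (2 * ψ ^ 2)) = Real.exp (4*ψ^2) := by norm_num; ring_nf
    rw [h1, h2]
    have := mul_le_mul_of_nonneg_left hcore (Real.exp_pos (-(2*ψ))).le
    calc Real.exp (-(2*ψ)) = Real.exp (-(2*ψ)) * 1 := by ring
      _ ≤ Real.exp (-(2*ψ)) * (Real.exp (2*ψ + 4*ψ^2) * (1 - 2*ψ)) := this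
      _ = Real.exp (4*ψ^2) * (1 - 2*ψ) := by
          rw [← mul_assoc, ← Real.exp_add]; ring_nf
  have h0 : (0:ℝ) ≤ Real.exp (2 * ψ ^ 2) * s := by positivity
  have := Real.sqrt_le_sqrt hsq
  rwa [Real.sqrt_sq (Real.exp_pos (-ψ)).le, Real.sqrt_sq h0] at this
end

section
/- Let K : ℝ → ℝ be bounded by K_max, Lipschitz with constant L_K, and supported on [−1,1]. Fix h > 0, n ∈ ℕ, Δ = T/n, t_k = kΔ. Then for any t, t' ∈ [0,T] with |t − t'| ≤ d, Δ·Σ_{k=1}^n |K_h(t_k − t) − K_h(t_k − t')| ≤ C·d/h for a constant C depending only on K and T, where K_h(u) = h^{−1}K(u/h). -/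
open Finset Set

lemma count_near (Δ hh a : ℝ) (hΔ : 0 < Δ) (hh0 : 0 < hh) (n : ℕ) :
    (((Finset.Icc 1 n).filter (fun k : ℕ => |(k : ℝ) * Δ - a| ≤ hh)).card : ℝ)
      ≤ 2 * hh / Δ + 1 := by
  set S := (Finset.Icc 1 n).filter (fun k : ℕ => |(k : ℝ) * Δ - a| ≤ hh) with hSdef
  rcases S.eq_empty_or_nonempty with hE | hS
  · rw [hE]; simp; positivity
  · set m := S.min' hS with hmdef
    set M := S.max' hS with hMdef
    have hmS := S.min'_mem hS
    have hMS := S.max'_mem hS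
    have hmM : m ≤ M := S.min'_le _ hMS
    have hsub : S ⊆ Finset.Icc m M := fun k hk =>
      Finset.mem_Icc.2 ⟨S.min'_le _ hk, S.le_max' _ hk⟩
    have hcard : S.card ≤ M - m + 1 := by
      have h1 := Finset.card_le_card hsub
      rw [Nat.card_Icc] at h1
      omega
    have hmb : |(m : ℝ) * Δ - a| ≤ hh := (Finset.mem_filter.1 hmS).2
    have hMb : |(M : ℝ) * Δ - a| ≤ hh := (Finset.mem_filter.1 hMS).2
    have hdiff : ((M : ℝ) - m) * Δ ≤ 2 * hh := by
      have h1 : (M : ℝ) * Δ - a ≤ hh := (abs_le.1 hMb).2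
      have h2 : -hh ≤ (m : ℝ) * Δ - a := (abs_le.1 hmb).1
      nlinarith
    have hMm : (M : ℝ) - m ≤ 2 * hh / Δ := by
      rw [le_div_iff₀ hΔ]; linarith
    calc (S.card : ℝ) ≤ ((M - m + 1 : ℕ) : ℝ) := by exact_mod_cast hcard
      _ = (M : ℝ) - m + 1 := by push_cast [hmM]; ring
      _ ≤ 2 * hh / Δ + 1 := by linarith

/-- Lipschitz-in-location bound for kernel weight sums, used in the
chaining/covering step. `K_h(u) = h⁻¹ K(u/h)`. -/
theorem kernel_weight_sum_lipschitz
    (K : ℝ → ℝ) (Kmax LK T : ℝ) (hKmax : 0 < Kmax) (hLK : 0 < LK) (hT : 0 < T)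
    (hbdd : ∀ u, |K u| ≤ Kmax)
    (hlip : ∀ u v, |K u - K v| ≤ LK * |u - v|)
    (hsupp : ∀ u, u ∉ Icc (-1 : ℝ) 1 → K u = 0) :
    ∃ C : ℝ, 0 < C ∧ ∀ (h : ℝ) (n : ℕ), 0 < h → 0 < n → T / n ≤ h →
      ∀ t t' : ℝ, t ∈ Icc 0 T → t' ∈ Icc 0 T → ∀ d : ℝ, |t - t'| ≤ d →
        (T / n) * ∑ k ∈ Finset.Icc 1 n,
            |h⁻¹ * K ((k * (T / n) - t) / h) - h⁻¹ * K ((k * (T / n) - t') / h)|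
          ≤ C * d / h := by
  classical
  refine ⟨6 * LK, by positivity, ?_⟩
  intro h n hh hn hΔh t t' ht ht' d hd
  set Δ := T / n with hΔdef
  have hΔ : 0 < Δ := div_pos hT (by exact_mod_cast hn)
  have hd0 : 0 ≤ d := le_trans (abs_nonneg _) hd
  set f := fun k : ℕ => |h⁻¹ * K (((k : ℝ) * Δ - t) / h) - h⁻¹ * K (((k : ℝ) * Δ - t') / h)|
    with hfdef
  -- termwise Lipschitz bound
  have hterm : ∀ k : ℕ, f k ≤ LK * d / h ^ 2 := by
    intro k
    have heq : f k = h⁻¹ * |K (((k : ℝ) * Δ - t) / h) - K (((k : ℝ) * Δ - t') / h)| := by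
      rw [hfdef]
      simp only [← mul_sub, abs_mul, abs_of_nonneg (le_of_lt (inv_pos.2 hh))]
    rw [heq]
    have h1 := hlip (((k : ℝ) * Δ - t) / h) (((k : ℝ) * Δ - t') / h)
    have h2 : |((k : ℝ) * Δ - t) / h - ((k : ℝ) * Δ - t') / h| = |t - t'| / h := by
      rw [div_sub_div_same]
      have heq2 : (k : ℝ) * Δ - t - ((k : ℝ) * Δ - t') = -(t - t') := by ring
      rw [heq2, abs_div, abs_neg, abs_of_pos hh]
    rw [h2] at h1
    calc h⁻¹ * |K (((k : ℝ) * Δ - t) / h) - K (((k : ℝ) * Δ - t') / h)|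
        ≤ h⁻¹ * (LK * (d / h)) := by
          apply mul_le_mul_of_nonneg_left _ (inv_nonneg.2 hh.le)
          refine h1.trans (mul_le_mul_of_nonneg_left ?_ hLK.le)
          gcongr
      _ = LK * d / h ^ 2 := by ring
  -- vanishing outside the kernel support
  have hvanish : ∀ k : ℕ, ¬ (|(k : ℝ) * Δ - t| ≤ h ∨ |(k : ℝ) * Δ - t'| ≤ h) → f k = 0 := by
    intro k hk
    push_neg at hk
    have hK1 : K (((k : ℝ) * Δ - t) / h) = 0 := by
      apply hsupp
      rw [Set.mem_Icc]
      intro hmem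
      have : |((k : ℝ) * Δ - t) / h| ≤ 1 := abs_le.2 hmem
      rw [abs_div, abs_of_pos hh, div_le_one hh] at this
      linarith [hk.1]
    have hK2 : K (((k : ℝ) * Δ - t') / h) = 0 := by
      apply hsupp
      rw [Set.mem_Icc]
      intro hmem
      have : |((k : ℝ) * Δ - t') / h| ≤ 1 := abs_le.2 hmem
      rw [abs_div, abs_of_pos hh, div_le_one hh] at this
      linarith [hk.2]
    simp [hfdef, hK1, hK2]
  -- split the sum along the support condition
  set P : ℕ → Prop := fun k => |(k : ℝ) * Δ - t| ≤ h ∨ |(k : ℝ) * Δ - t'| ≤ h with hPdef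
  have hsplit : ∑ k ∈ Finset.Icc 1 n, f k = ∑ k ∈ (Finset.Icc 1 n).filter P, f k := by
    rw [← Finset.sum_filter_add_sum_filter_not (Finset.Icc 1 n) P f]
    have : ∑ k ∈ (Finset.Icc 1 n).filter (fun k => ¬ P k), f k = 0 :=
      Finset.sum_eq_zero fun k hk => hvanish k (Finset.mem_filter.1 hk).2
    rw [this, add_zero]
  -- count the surviving terms
  have hcount : (((Finset.Icc 1 n).filter P).card : ℝ) ≤ 6 * h / Δ := by
    have hfo : (Finset.Icc 1 n).filter P =
        ((Finset.Icc 1 n).filter (fun k : ℕ => |(k : ℝ) * Δ - t| ≤ h)) ∪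
        ((Finset.Icc 1 n).filter (fun k : ℕ => |(k : ℝ) * Δ - t'| ≤ h)) := by
      rw [← Finset.filter_or]
    have hle : ((Finset.Icc 1 n).filter P).card ≤
        ((Finset.Icc 1 n).filter (fun k : ℕ => |(k : ℝ) * Δ - t| ≤ h)).card +
        ((Finset.Icc 1 n).filter (fun k : ℕ => |(k : ℝ) * Δ - t'| ≤ h)).card := by
      rw [hfo]; exact Finset.card_union_le _ _
    have h1 := count_near Δ h t hΔ hh n
    have h2 := count_near Δ h t' hΔ hh n
    have hΔh' : 1 ≤ h / Δ := (one_le_div hΔ).2 hΔh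
    have : (((Finset.Icc 1 n).filter P).card : ℝ)
        ≤ (2 * h / Δ + 1) + (2 * h / Δ + 1) := by
      calc (((Finset.Icc 1 n).filter P).card : ℝ)
          ≤ (((Finset.Icc 1 n).filter (fun k : ℕ => |(k : ℝ) * Δ - t| ≤ h)).card : ℝ) +
            (((Finset.Icc 1 n).filter (fun k : ℕ => |(k : ℝ) * Δ - t'| ≤ h)).card : ℝ) := by
            exact_mod_cast hle
        _ ≤ (2 * h / Δ + 1) + (2 * h / Δ + 1) := add_le_add h1 h2
    have h4 : 2 * h / Δ = 2 * (h / Δ) := by ring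
    rw [h4] at this
    have h6 : 6 * h / Δ = 6 * (h / Δ) := by ring
    rw [h6]
    linarith
  -- put it together
  have hsum : ∑ k ∈ Finset.Icc 1 n, f k ≤ (6 * h / Δ) * (LK * d / h ^ 2) := by
    rw [hsplit]
    calc ∑ k ∈ (Finset.Icc 1 n).filter P, f k
        ≤ ∑ _k ∈ (Finset.Icc 1 n).filter P, (LK * d / h ^ 2) :=
          Finset.sum_le_sum fun k _ => hterm k
      _ = (((Finset.Icc 1 n).filter P).card : ℝ) * (LK * d / h ^ 2) := by
          rw [Finset.sum_const, nsmul_eq_mul]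
      _ ≤ (6 * h / Δ) * (LK * d / h ^ 2) := by
          apply mul_le_mul_of_nonneg_right hcount
          positivity
  calc Δ * ∑ k ∈ Finset.Icc 1 n, f k ≤ Δ * ((6 * h / Δ) * (LK * d / h ^ 2)) := by
        exact mul_le_mul_of_nonneg_left hsum hΔ.le
    _ = 6 * LK * d / h := by field_simp
end

section
/- Let Σ_t^Y = β(t)Σ_t^F β(t)ᵀ + Σ_t^X be a p×p positive definite matrix, where β(t) is p×k, Σ_t^F is k×k positive definite with eigenvalues bounded above and below, Σ_t^X has eigenvalues bounded above and below by positive constants, and (1/p)β(t)ᵀβ(t) converges to a positive definite matrix with uniformly bounded eigenvalues. Then ‖β(t)ᵀ(Σ_t^Y)^{−1}β(t)‖ is bounded above by a constant independent of p. -/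
open Matrix

/-- Euclidean inner product of two plain vectors equals their dot product. -/
lemma inner_withLp_symm {m : ℕ} (a b : Fin m → ℝ) :
    (inner ℝ ((WithLp.equiv 2 (Fin m → ℝ)).symm a) ((WithLp.equiv 2 (Fin m → ℝ)).symm b) : ℝ)
      = a ⬝ᵥ b := by
  simp [WithLp.equiv_symm_apply, PiLp.inner_apply, dotProduct, mul_comm]

/-- equation (A.15): under pervasive factors and uniformly bounded
eigenvalues of the factor and idiosyncratic volatility matrices,
`‖βᵀ(Σ^Y)⁻¹β‖` is bounded by a constant independent of the dimension `p`. -/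
theorem beta_inv_sandwich_bounded
    (c₁ c₂ : ℝ) (hc₁ : 0 < c₁) (hc₂ : 0 < c₂) :
    ∃ C : ℝ, 0 < C ∧
      ∀ (p k : ℕ) (hp : 0 < p) (hk : 0 < k)
        (β : Matrix (Fin p) (Fin k) ℝ)
        (SF : Matrix (Fin k) (Fin k) ℝ) (SX : Matrix (Fin p) (Fin p) ℝ),
        SF.PosDef → SX.PosDef →
        (∀ x : Fin k → ℝ, c₁ * (x ⬝ᵥ x) ≤ x ⬝ᵥ (SF *ᵥ x) ∧
            x ⬝ᵥ (SF *ᵥ x) ≤ c₂ * (x ⬝ᵥ x)) →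
        (∀ x : Fin p → ℝ, c₁ * (x ⬝ᵥ x) ≤ x ⬝ᵥ (SX *ᵥ x) ∧
            x ⬝ᵥ (SX *ᵥ x) ≤ c₂ * (x ⬝ᵥ x)) →
        (∀ x : Fin k → ℝ,
            c₁ * (x ⬝ᵥ x) ≤ x ⬝ᵥ (((p : ℝ)⁻¹ • (βᵀ * β)) *ᵥ x) ∧
            x ⬝ᵥ (((p : ℝ)⁻¹ • (βᵀ * β)) *ᵥ x) ≤ c₂ * (x ⬝ᵥ x)) →
        (β * SF * βᵀ + SX).PosDef →
        ‖Matrix.toEuclideanCLM (𝕜 := ℝ)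
            (βᵀ * (β * SF * βᵀ + SX)⁻¹ * β)‖ ≤ C := by
  refine ⟨c₁⁻¹, by positivity, ?_⟩
  intro p k hp hk β SF SX hSF hSX hF hX hperv hS
  set S : Matrix (Fin p) (Fin p) ℝ := β * SF * βᵀ + SX with hSdef
  set A : Matrix (Fin k) (Fin k) ℝ := βᵀ * S⁻¹ * β with hAdef
  -- key quadratic inequality : c₁‖βᵀu‖² ≤ uᵀ Σ u
  have key : ∀ u : Fin p → ℝ,
      c₁ * ((βᵀ *ᵥ u) ⬝ᵥ (βᵀ *ᵥ u)) ≤ u ⬝ᵥ (S *ᵥ u) := by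
    intro u
    have h1 : u ⬝ᵥ (S *ᵥ u)
        = (βᵀ *ᵥ u) ⬝ᵥ (SF *ᵥ (βᵀ *ᵥ u)) + u ⬝ᵥ (SX *ᵥ u) := by
      rw [hSdef, add_mulVec, dotProduct_add]
      congr 1
      rw [← mulVec_mulVec, ← mulVec_mulVec, dotProduct_mulVec u β,
        ← mulVec_transpose]
    have h2 : c₁ * ((βᵀ *ᵥ u) ⬝ᵥ (βᵀ *ᵥ u)) ≤ (βᵀ *ᵥ u) ⬝ᵥ (SF *ᵥ (βᵀ *ᵥ u)) :=
      (hF (βᵀ *ᵥ u)).1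
    have h3 : 0 ≤ u ⬝ᵥ (SX *ᵥ u) := by simpa using hSX.posSemidef.dotProduct_mulVec_nonneg u
    linarith
  apply ContinuousLinearMap.opNorm_le_bound _ (by positivity)
  intro x
  set y : Fin k → ℝ := WithLp.equiv 2 (Fin k → ℝ) x with hy
  have hx : x = (WithLp.equiv 2 (Fin k → ℝ)).symm y := rfl
  have happ : (toEuclideanCLM (𝕜 := ℝ) A) x
      = (WithLp.equiv 2 (Fin k → ℝ)).symm (A *ᵥ y) := by
    rw [hx]; exact toEuclideanCLM_toLp A y
  set v : Fin k → ℝ := A *ᵥ y with hv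
  set s : Fin p → ℝ := β *ᵥ y with hs
  set w : Fin p → ℝ := S⁻¹ *ᵥ s with hw
  have hvw : v = βᵀ *ᵥ w := by
    rw [hv, hAdef, ← mulVec_mulVec, ← mulVec_mulVec]
  -- S *ᵥ w = s
  have hSw : S *ᵥ w = s := by
    rw [hw, mulVec_mulVec, Matrix.mul_nonsing_inv _ hS.det_pos.ne'.isUnit, one_mulVec]
  -- ‖v‖² ≤ c₁⁻¹ * (w ⬝ᵥ s)
  have h4 : c₁ * (v ⬝ᵥ v) ≤ w ⬝ᵥ s := by
    have := key w
    rw [hSw, ← hvw] at this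
    exact this
  -- w ⬝ᵥ s = y ⬝ᵥ v
  have h5 : y ⬝ᵥ v = w ⬝ᵥ s := by
    rw [hvw, dotProduct_mulVec y βᵀ, ← mulVec_transpose, transpose_transpose,
      ← hs, dotProduct_comm]
  -- translate to norms
  set V : EuclideanSpace ℝ (Fin k) := (WithLp.equiv 2 (Fin k → ℝ)).symm v
  have hVv : v ⬝ᵥ v = ‖V‖ * ‖V‖ := by
    rw [← inner_withLp_symm v v]
    exact real_inner_self_eq_norm_mul_norm V
  have hyv : y ⬝ᵥ v ≤ ‖x‖ * ‖V‖ := by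
    rw [← inner_withLp_symm y v, ← hx]
    exact real_inner_le_norm x V
  have hnorm : ‖(toEuclideanCLM (𝕜 := ℝ) A) x‖ = ‖V‖ := by rw [happ]
  rw [hnorm]
  -- from c₁‖V‖² ≤ ‖x‖‖V‖ conclude
  have hc : c₁ * (‖V‖ * ‖V‖) ≤ ‖x‖ * ‖V‖ := by
    rw [← hVv]; linarith [h4, h5.symm ▸ hyv]
  rcases eq_or_lt_of_le (norm_nonneg V) with h0 | h0
  · rw [← h0]; positivity
  · rw [inv_mul_eq_div, le_div_iff₀ hc₁]
    nlinarith
end
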